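/- Let μ be a probability measure on ℝ with density p that is ℓ-Lipschitz and satisfies the sub-Gaussian tail bound ℙ_{X∼μ}[|X| ≥ t] ≤ 2exp(−t²/σ²). If the bucket width is chosen as b = ε/(σ·ℓ·√(log(2/ε))) (up to an absolute constant), then the piecewise-constant bucketed measure μ_b restricted to the interval [−T, T] with T = σ·√(log(2/ε)) satisfies TV(μ, μ_b) ≤ ε, where outside [−T,T] the bucketed measure is taken to be zero (with the remaining mass at most ε/2 accounted as TV error). -/

import Mathlib

open MeasureTheory

lemma bucket_avg_err (p : ℝ → ℝ) (hp : Integrable p) (ℓ b : ℝ) (hb : 0 < b)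
    (hl : 0 ≤ ℓ) (hlip : ∀ a b' : ℝ, |p a - p b'| ≤ ℓ * |a - b'|)
    (a x : ℝ) (hx : x ∈ Set.Ico a (a + b)) :
    |p x - (1 / b) * ∫ t in Set.Ico a (a + b), p t| ≤ ℓ * b := by
  have hvol : (volume (Set.Ico a (a + b))).toReal = b := by
    rw [Real.volume_Ico]
    simp [ENNReal.toReal_ofReal hb.le]
  have hint : IntegrableOn p (Set.Ico a (a + b)) := hp.integrableOn
  have hfin : volume (Set.Ico a (a + b)) < ⊤ := by
    rw [Real.volume_Ico]; exact ENNReal.ofReal_lt_top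
  have hconst : ∀ c : ℝ, IntegrableOn (fun _ => c) (Set.Ico a (a + b)) volume :=
    fun c => integrableOn_const hfin.ne
  have h1 : ∫ t in Set.Ico a (a + b), (p x - p t) =
      b * p x - ∫ t in Set.Ico a (a + b), p t := by
    rw [integral_sub (hconst (p x)) hint, setIntegral_const, measureReal_def, hvol, smul_eq_mul]
  have h2 : |∫ t in Set.Ico a (a + b), (p x - p t)| ≤ ℓ * b * b := by
    calc |∫ t in Set.Ico a (a + b), (p x - p t)|
        ≤ ∫ t in Set.Ico a (a + b), |p x - p t| := by
          simpa [Real.norm_eq_abs] using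
            norm_integral_le_integral_norm (μ := volume.restrict (Set.Ico a (a + b)))
              (f := fun t => p x - p t)
      _ ≤ ∫ _t in Set.Ico a (a + b), ℓ * b := by
          apply setIntegral_mono_on ((hconst (p x)).sub hint).abs (hconst (ℓ * b))
            measurableSet_Ico
          · intro t ht
            refine (hlip x t).trans ?_
            apply mul_le_mul_of_nonneg_left _ hl
            rw [abs_sub_le_iff]
            constructor <;> [skip; skip] <;>
              · obtain ⟨hx1, hx2⟩ := hx
                obtain ⟨ht1, ht2⟩ := ht
                linarith
      _ = ℓ * b * b := by rw [setIntegral_const, measureReal_def, hvol, smul_eq_mul, mul_comm]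
  have h3 : p x - (1 / b) * ∫ t in Set.Ico a (a + b), p t =
      (1 / b) * ∫ t in Set.Ico a (a + b), (p x - p t) := by
    rw [h1]; field_simp
  rw [h3, abs_mul, abs_of_pos (by positivity : (0:ℝ) < 1 / b)]
  calc (1 / b) * |∫ t in Set.Ico a (a + b), (p x - p t)|
      ≤ (1 / b) * (ℓ * b * b) := by
        exact mul_le_mul_of_nonneg_left h2 (by positivity)
    _ = ℓ * b := by field_simp

/-- there is an absolute constant `c > 0` such that for any probability
measure `μ` on ℝ with ℓ-Lipschitz density `p` satisfying the σ-sub-Gaussian tail bound,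
choosing bucket width `b = c·ε/(σ·ℓ·√(log(2/ε)))` and truncation `T = σ·√(log(2/ε))`, the
piecewise-constant bucketed density (bucket averages inside `[−T,T]`, zero outside)
approximates `p` within `ε` in total variation: `(1/2)∫|p − p_b| ≤ ε`. -/
theorem tv_bucket_width_subGaussian :
    ∃ c : ℝ, 0 < c ∧
      ∀ (μ : Measure ℝ), IsProbabilityMeasure μ →
      ∀ (p : ℝ → ℝ), (∀ x, 0 ≤ p x) → Integrable p →
      μ = MeasureTheory.volume.withDensity (fun x => ENNReal.ofReal (p x)) →
      ∀ (ℓ σ ε : ℝ), 0 < ℓ → 0 < σ → ε ∈ Set.Ioo (0 : ℝ) 1 →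
      (∀ a b' : ℝ, |p a - p b'| ≤ ℓ * |a - b'|) →
      (∀ t : ℝ, 0 ≤ t →
        μ {x | t ≤ |x|} ≤ ENNReal.ofReal (2 * Real.exp (-t ^ 2 / σ ^ 2))) →
      ∀ (b T : ℝ),
        b = c * ε / (σ * ℓ * Real.sqrt (Real.log (2 / ε))) →
        T = σ * Real.sqrt (Real.log (2 / ε)) →
        ∀ (pb : ℝ → ℝ),
          (∀ x : ℝ, pb x =
            if |x| ≤ T then
              (1 / b) * ∫ t in Set.Ico (-T + (⌊(x + T) / b⌋ : ℝ) * b)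
                                        (-T + ((⌊(x + T) / b⌋ : ℝ) + 1) * b), p t
            else 0) →
          (1 / 2) * (∫ x, |p x - pb x|) ≤ ε := by
  refine ⟨1/2, by norm_num, ?_⟩
  intro μ hμprob p hp0 hpint hμ ℓ σ ε hℓ hσ hε hlip htail b T hbdef hTdef pb hpb
  obtain ⟨hε0, hε1⟩ := hε
  -- basic positivity facts
  have hlog : 0 < Real.log (2 / ε) := by
    apply Real.log_pos
    rw [lt_div_iff₀ hε0]; linarith
  set L := Real.sqrt (Real.log (2 / ε)) with hLdef
  have hL : 0 < L := Real.sqrt_pos.2 hlog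
  have hT : 0 < T := by rw [hTdef]; positivity
  have hb : 0 < b := by rw [hbdef]; positivity
  -- key size identity : 2 * T * (ℓ * b) = ε
  have hsize : 2 * T * (ℓ * b) = ε := by
    rw [hTdef, hbdef]
    field_simp
  set s : Set ℝ := {x : ℝ | |x| ≤ T} with hsdef
  have hs_meas : MeasurableSet s :=
    (isClosed_le continuous_abs continuous_const).measurableSet
  have hsIcc : s = Set.Icc (-T) T := by
    ext x; simp [hsdef, abs_le]
  -- pointwise bucket error bound on s
  have key : ∀ x ∈ s, |p x - pb x| ≤ ℓ * b := by
    intro x hx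
    rw [hpb x, if_pos (show |x| ≤ T from hx)]
    have heq : -T + ((⌊(x + T) / b⌋ : ℝ) + 1) * b =
        (-T + (⌊(x + T) / b⌋ : ℝ) * b) + b := by ring
    rw [heq]
    apply bucket_avg_err p hpint ℓ b hb hℓ.le hlip
    constructor
    · have := Int.floor_le ((x + T) / b)
      have h2 : (⌊(x + T) / b⌋ : ℝ) * b ≤ ((x + T) / b) * b :=
        mul_le_mul_of_nonneg_right this hb.le
      rw [div_mul_cancel₀ _ hb.ne'] at h2
      linarith
    · have := Int.lt_floor_add_one ((x + T) / b)
      have h2 : ((x + T) / b) * b < ((⌊(x + T) / b⌋ : ℝ) + 1) * b :=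
        mul_lt_mul_of_pos_right this hb
      rw [div_mul_cancel₀ _ hb.ne'] at h2
      linarith
  -- measurability and integrability of pb
  have hpb_meas : Measurable pb := by
    have : pb = fun x => if |x| ≤ T then
        (fun k : ℤ => (1 / b) * ∫ t in Set.Ico (-T + (k : ℝ) * b)
          (-T + ((k : ℝ) + 1) * b), p t) ⌊(x + T) / b⌋ else 0 := by
      funext x; rw [hpb x]
    rw [this]
    refine Measurable.ite hs_meas ?_ measurable_const
    exact (measurable_of_countable (fun k : ℤ => (1 / b) * ∫ t in Set.Ico (-T + (k : ℝ) * b)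
      (-T + ((k : ℝ) + 1) * b), p t)).comp
      (((measurable_id.add_const T).div_const b).floor)
  have hpb_nonneg : ∀ x, 0 ≤ pb x := by
    intro x; rw [hpb x]
    split
    · exact mul_nonneg (by positivity) (setIntegral_nonneg measurableSet_Ico fun t _ => hp0 t)
    · exact le_refl 0
  have hg_int : Integrable (fun x => |p x| + s.indicator (fun _ => ℓ * b) x) := by
    apply hpint.abs.add
    apply (integrableOn_const ?_).integrable_indicator hs_meas
    rw [hsIcc, Real.volume_Icc]
    exact ENNReal.ofReal_ne_top
  have hpb_int : Integrable pb := by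
    apply Integrable.mono' hg_int hpb_meas.aestronglyMeasurable
    apply Filter.Eventually.of_forall
    intro x
    rw [Real.norm_eq_abs, abs_of_nonneg (hpb_nonneg x)]
    by_cases hx : x ∈ s
    · have h1 := key x hx
      have h2 : pb x - p x ≤ ℓ * b := by
        have := abs_le.1 h1
        linarith [this.1]
      have h3 : s.indicator (fun _ => ℓ * b) x = ℓ * b := Set.indicator_of_mem hx _
      rw [h3]
      have : p x ≤ |p x| := le_abs_self _
      linarith
    · rw [hpb x, if_neg (show ¬ |x| ≤ T from hx), Set.indicator_of_notMem hx]
      positivity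
  have hdiff : Integrable (fun x => |p x - pb x|) := (hpint.sub hpb_int).abs
  -- split integral
  have hsplit : ∫ x, |p x - pb x| =
      (∫ x in s, |p x - pb x|) + ∫ x in sᶜ, |p x - pb x| :=
    (integral_add_compl hs_meas hdiff).symm
  -- tail part
  have htail_eq : ∫ x in sᶜ, |p x - pb x| = ∫ x in sᶜ, p x := by
    apply setIntegral_congr_fun hs_meas.compl
    intro x hx
    have hx' : ¬ |x| ≤ T := hx
    show |p x - pb x| = p x
    rw [hpb x, if_neg hx', sub_zero, abs_of_nonneg (hp0 x)]
  have htail_le : ∫ x in sᶜ, p x ≤ ε := by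
    have h1 : ENNReal.ofReal (∫ x in sᶜ, p x) = μ sᶜ := by
      rw [hμ, withDensity_apply _ hs_meas.compl]
      exact ofReal_integral_eq_lintegral_ofReal hpint.integrableOn
        (Filter.Eventually.of_forall fun x => hp0 x)
    have h2 : μ sᶜ ≤ ENNReal.ofReal ε := by
      have hsub : sᶜ ⊆ {x : ℝ | T ≤ |x|} := by
        intro x hx
        have hx' : ¬ |x| ≤ T := hx
        exact le_of_lt (not_le.1 hx')
      refine le_trans (measure_mono hsub) (le_trans (htail T hT.le) ?_)
      apply le_of_eq
      congr 1
      have hTsq : T ^ 2 = σ ^ 2 * Real.log (2 / ε) := by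
        rw [hTdef]
        rw [mul_pow, hLdef, Real.sq_sqrt hlog.le]
      rw [hTsq]
      have h3 : -(σ ^ 2 * Real.log (2 / ε)) / σ ^ 2 = -Real.log (2 / ε) := by
        field_simp
      rw [h3, Real.exp_neg, Real.exp_log (by positivity), inv_div]
      ring
    rw [← h1] at h2
    exact (ENNReal.ofReal_le_ofReal_iff hε0.le).1 h2
  -- bucket part
  have hbucket : ∫ x in s, |p x - pb x| ≤ ε := by
    calc ∫ x in s, |p x - pb x| ≤ ∫ _x in s, ℓ * b := by
          apply setIntegral_mono_on hdiff.integrableOn ?_ hs_meas key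
          apply integrableOn_const ?_
          rw [hsIcc, Real.volume_Icc]
          exact ENNReal.ofReal_ne_top
      _ = (2 * T) * (ℓ * b) := by
          rw [setIntegral_const, smul_eq_mul, hsIcc, measureReal_def, Real.volume_Icc]
          rw [ENNReal.toReal_ofReal (by linarith)]
          ring_nf
      _ = ε := hsize
  rw [hsplit, htail_eq]
  linarith
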